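/- Let n be odd with ⌈n/2⌉ divisible by 3. Then for every x = x_1…x_{n−2} ∈ {0,1}^{n−2} there exist bits c₁, c₂ ∈ {0,1} with c₁ ≤ c₂ such that the string s = x_1 c₁ x_2 x_3 … x_{n−3} c₂ x_{n−2} ∈ {0,1}^n (obtained by inserting c₁ at position 2 and c₂ at position n−1) satisfies Σ_{i=1}^{⌈n/2⌉} w_i(s) ≡ 0 (mod 3). -/

import Mathlib

/-- The composition of a binary string: the pair (number of 0s, number of 1s).
Here `false` represents the bit 0 and `true` the bit 1. -/
def comp (w : List Bool) : ℕ × ℕ := (w.count false, w.count true)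

/-- The multiset of compositions of all contiguous substrings of `s` of length `l`. -/
def compLen (l : ℕ) (s : List Bool) : Multiset (ℕ × ℕ) :=
  ↑((List.range (s.length + 1 - l)).map fun i => comp ((s.drop i).take l))

/-- The composition multiset `C(s)`: compositions of all contiguous substrings of `s`. -/
def compMS (s : List Bool) : Multiset (ℕ × ℕ) :=
  ↑((List.range s.length).flatMap fun i =>
    (List.range (s.length - i)).map fun j => comp ((s.drop i).take (j + 1)))

/-- A single composition error: one element `(z,w)` of `M` is replaced by a
pair `(z',w')` with the same length `z'+w' = z+w`. -/
def OneErr (M M' : Multiset (ℕ × ℕ)) : Prop :=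
  ∃ z w z' w' : ℕ, (z, w) ∈ M ∧ z + w = z' + w' ∧
    M' = M - {(z, w)} + {(z', w')}

/-- `AtMostErr t M D`: `D` is obtained from `M` by at most `t` composition errors. -/
def AtMostErr : ℕ → Multiset (ℕ × ℕ) → Multiset (ℕ × ℕ) → Prop
  | 0, M, D => M = D
  | t + 1, M, D => M = D ∨ ∃ M', OneErr M M' ∧ AtMostErr t M' D

/-- The sub-multiset of elements (compositions) of length `l`. -/
def lenPart (l : ℕ) (M : Multiset (ℕ × ℕ)) : Multiset (ℕ × ℕ) :=
  M.filter fun p => p.1 + p.2 = l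

/-- `D` is the result of at most `t` *asymmetric* composition errors in `C(s)`,
for a string of length `n`: additionally, for each `1 ≤ i ≤ ⌊n/2⌋`, at most one
of the two sub-multisets of lengths `i` and `n+1-i` is altered. -/
def AsymErr (t n : ℕ) (s : List Bool) (D : Multiset (ℕ × ℕ)) : Prop :=
  AtMostErr t (compMS s) D ∧
  ∀ i, 1 ≤ i → i ≤ n / 2 →
    lenPart i D ≠ compLen i s → lenPart (n + 1 - i) D = compLen (n + 1 - i) s

/-- A Catalan-Bertrand string: every nonempty prefix has strictly more 0s than 1s. -/
def IsCB (w : List Bool) : Prop :=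
  ∀ j, 1 ≤ j → j ≤ w.length → (w.take j).count true < (w.take j).count false

/-- The reconstruction code `S_R(n)` for even `n`: `s_1 = 0`, `s_n = 1`, and the
subsequence of `s` indexed by the positions `i ∈ {1,…,n/2}` with `s_i ≠ s_{n+1-i}`
(in increasing order) is a Catalan-Bertrand string (indices here are 0-based). -/
def SReven (n : ℕ) : Set (List Bool) :=
  { s | s.length = n ∧ s.getD 0 false = false ∧ s.getD (n - 1) false = true ∧
    IsCB (((List.range (n / 2)).filter fun i =>
        s.getD i false != s.getD (n - 1 - i) false).map fun i => s.getD i false) }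

/-- The reconstruction code `S_R(n)`: for odd `n`, obtained from `S_R(n-1)` by
inserting an arbitrary middle bit. -/
def SR (n : ℕ) : Set (List Bool) :=
  if Even n then SReven n
  else { s | ∃ v ∈ SReven (n - 1), ∃ b : Bool,
      s = v.take ((n - 1) / 2) ++ [b] ++ v.drop ((n - 1) / 2) }

/-- The cumulative weight `w_l(s)`: total number of 1s over all length-`l`
contiguous substrings of `s`. -/
def cumW (l : ℕ) (s : List Bool) : ℕ :=
  ∑ i ∈ Finset.range (s.length + 1 - l), ((s.drop i).take l).count true

/-- `σ_i(s) = s_i + s_{n+1-i}` for `1 ≤ i ≤ ⌊n/2⌋`, and `σ_{⌈n/2⌉}(s) = s_{⌈n/2⌉}`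
for odd `n` (1-based indexing in the mathematical description). -/
def sigmaSeq (s : List Bool) (i : ℕ) : ℕ :=
  if 2 * i ≤ s.length then
    (if s.getD (i - 1) false then 1 else 0) +
      (if s.getD (s.length - i) false then 1 else 0)
  else (if s.getD (i - 1) false then 1 else 0)

lemma count_window_insert (A B : List Bool) (c : Bool) (l i : ℕ) :
    (((A ++ c :: B).drop i).take l).count true =
    (((A ++ false :: B).drop i).take l).count true +
      (if i ≤ A.length ∧ A.length < i + l then c.toNat else 0) := by
  rcases le_or_gt i A.length with hi | hi
  · rw [List.drop_append_of_le_length hi, List.drop_append_of_le_length hi]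
    rcases le_or_gt l (A.length - i) with hl | hl
    · have hl' : l ≤ (A.drop i).length := by simp; omega
      rw [List.take_append_of_le_length hl', List.take_append_of_le_length hl']
      have hnot : ¬ (i ≤ A.length ∧ A.length < i + l) := by omega
      simp [hnot]
    · rw [List.take_append, List.take_append]
      have hlen : (A.drop i).length = A.length - i := by simp
      obtain ⟨k, hk⟩ : ∃ k, l - (A.drop i).length = k + 1 :=
        ⟨l - (A.drop i).length - 1, by omega⟩
      rw [hk]
      have hcond : (i ≤ A.length ∧ A.length < i + l) := ⟨hi, by omega⟩
      cases c <;> simp [List.count_append, List.count_cons, hcond] <;> omega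
  · obtain ⟨k, hk⟩ : ∃ k, i = A.length + 1 + k := ⟨i - A.length - 1, by omega⟩
    subst hk
    have h1 : ∀ c' : Bool, (A ++ c' :: B).drop (A.length + 1 + k) = B.drop k := by
      intro c'
      have h := List.drop_length_add_append (l₁ := A ++ [c']) (l₂ := B) k
      simpa [Nat.add_assoc, Nat.add_comm, Nat.add_left_comm] using h
    rw [h1, h1]
    have hnot : ¬ (A.length + 1 + k ≤ A.length ∧ A.length < A.length + 1 + k + l) := by omega
    simp [hnot]

def ccoef (p N m : ℕ) : ℕ :=
  ∑ l ∈ Finset.Icc 1 m, ∑ i ∈ Finset.range (N + 1 - l),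
    (if i ≤ p ∧ p < i + l then 1 else 0)

lemma sum_cumW_insert (A B : List Bool) (c : Bool) (m : ℕ) :
    (∑ l ∈ Finset.Icc 1 m, cumW l (A ++ c :: B)) =
    (∑ l ∈ Finset.Icc 1 m, cumW l (A ++ false :: B)) +
      c.toNat * ccoef A.length (A.length + B.length + 1) m := by
  have hlen : ∀ c' : Bool, (A ++ c' :: B).length = A.length + B.length + 1 := by
    intro c'; simp; omega
  unfold cumW ccoef
  rw [Finset.mul_sum]
  rw [← Finset.sum_add_distrib]
  refine Finset.sum_congr rfl fun l _ => ?_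
  rw [hlen, hlen, Finset.mul_sum, ← Finset.sum_add_distrib]
  refine Finset.sum_congr rfl fun i _ => ?_
  rw [count_window_insert A B c l i]
  congr 1
  split <;> simp

lemma ccoef_one (n m : ℕ) (hn : n = 2 * m - 1) (hm : 3 ≤ m) :
    ccoef 1 n m = 2 * m - 1 := by
  unfold ccoef
  have key : ∀ l ∈ Finset.Icc 1 m,
      (∑ i ∈ Finset.range (n + 1 - l), (if i ≤ 1 ∧ 1 < i + l then 1 else 0)) =
      1 + (if 2 ≤ l then 1 else 0) := by
    intro l hl
    simp only [Finset.mem_Icc] at hl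
    have hk : 3 ≤ n + 1 - l := by omega
    rw [← Finset.sum_subset (Finset.range_subset_range.2 (by omega : 2 ≤ n + 1 - l))
      (fun i _ hi => by
        simp only [Finset.mem_range, not_lt] at hi
        have : ¬ (i ≤ 1 ∧ 1 < i + l) := by omega
        simp [this])]
    rw [Finset.sum_range_succ, Finset.sum_range_one]
    have h1 : (1 ≤ 1 ∧ 1 < 1 + l) := ⟨le_refl 1, by omega⟩
    simp only [h1, and_true, Nat.zero_le, true_and, if_true]
    rcases le_or_gt 2 l with h2 | h2
    · have : 1 < 0 + l := by omega
      simp [this, h2]; omega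
    · have hl1 : l = 1 := by omega
      subst hl1
      norm_num
  rw [Finset.sum_congr rfl key]
  rw [Finset.sum_add_distrib]
  simp only [Finset.sum_const, Nat.card_Icc, smul_eq_mul, mul_one]
  have hfil : ∑ l ∈ Finset.Icc 1 m, (if 2 ≤ l then 1 else 0) = m - 1 := by
    rw [← Finset.card_filter]
    have : (Finset.Icc 1 m).filter (fun l => 2 ≤ l) = Finset.Icc 2 m := by
      ext l; simp [Finset.mem_Icc, Finset.mem_filter]; omega
    rw [this, Nat.card_Icc]; omega
  rw [hfil]; omega


lemma ccoef_top (n m : ℕ) (hn : n = 2 * m - 1) (hm : 3 ≤ m) :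
    ccoef (n - 2) n m = 2 * m - 1 := by
  unfold ccoef
  have key : ∀ l ∈ Finset.Icc 1 m,
      (∑ i ∈ Finset.range (n + 1 - l), (if i ≤ n - 2 ∧ n - 2 < i + l then 1 else 0)) =
      1 + (if 2 ≤ l then 1 else 0) := by
    intro l hl
    simp only [Finset.mem_Icc] at hl
    obtain ⟨k, hk⟩ : ∃ k, n + 1 - l = k + 2 := ⟨n - 1 - l, by omega⟩
    rw [hk, Finset.sum_range_succ, Finset.sum_range_succ]
    have h0 : ∑ i ∈ Finset.range k, (if i ≤ n - 2 ∧ n - 2 < i + l then 1 else 0) = 0 := by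
      apply Finset.sum_eq_zero; intro i hi
      simp only [Finset.mem_range] at hi
      have : ¬ (i ≤ n - 2 ∧ n - 2 < i + l) := by omega
      simp [this]
    have h1 : (k ≤ n - 2 ∧ n - 2 < k + l) := by omega
    rw [h0, if_pos h1]
    rcases le_or_gt 2 l with h2 | h2
    · have h3 : (k + 1 ≤ n - 2 ∧ n - 2 < k + 1 + l) := by omega
      simp [h3, h2]
    · have hl1 : ¬ (k + 1 ≤ n - 2) := by omega
      have : ¬ (2:ℕ) ≤ l := by omega
      simp [hl1, this]
  rw [Finset.sum_congr rfl key]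
  rw [Finset.sum_add_distrib]
  simp only [Finset.sum_const, Nat.card_Icc, smul_eq_mul, mul_one]
  have hfil : ∑ l ∈ Finset.Icc 1 m, (if 2 ≤ l then 1 else 0) = m - 1 := by
    rw [← Finset.card_filter]
    have : (Finset.Icc 1 m).filter (fun l => 2 ≤ l) = Finset.Icc 2 m := by
      ext l; simp [Finset.mem_Icc, Finset.mem_filter]; omega
    rw [this, Nat.card_Icc]; omega
  rw [hfil]; omega


/-- Let `n` be odd with `3 ∣ ⌈n/2⌉`. For every `x ∈ {0,1}^{n−2}`
there exist bits `c₁ ≤ c₂` such that inserting `c₁` at position 2 and `c₂` at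
position `n−1` yields a string `s` with `Σ_{i=1}^{⌈n/2⌉} w_i(s) ≡ 0 (mod 3)`. -/
theorem exists_insertion_bits (n : ℕ) (hodd : Odd n) (h3 : 3 ∣ (n + 1) / 2)
    (x : List Bool) (hx : x.length = n - 2) :
    ∃ c₁ c₂ : Bool, c₁ ≤ c₂ ∧
      (∑ i ∈ Finset.Icc 1 ((n + 1) / 2),
        cumW i (x.take 1 ++ [c₁] ++ (x.drop 1).take (n - 4) ++ [c₂] ++
          x.drop (n - 3))) % 3 = 0 := by
  set m := (n + 1) / 2 with hm
  obtain ⟨r, hr⟩ := hodd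
  have hmn : n = 2 * m - 1 := by omega
  have hm1 : 1 ≤ m := by omega
  have hm3 : 3 ≤ m := by
    rcases h3 with ⟨u, hu⟩; omega
  have hn5 : 5 ≤ n := by omega
  set A : List Bool := x.take 1 with hA
  set C : List Bool := (x.drop 1).take (n - 4) with hC
  set D : List Bool := x.drop (n - 3) with hD
  have hAl : A.length = 1 := by simp [hA]; omega
  have hCl : C.length = n - 4 := by simp [hC]; omega
  have hDl : D.length = 1 := by simp [hD]; omega
  have hshape : ∀ c₁ c₂ : Bool,
      A ++ [c₁] ++ C ++ [c₂] ++ D = A ++ c₁ :: (C ++ c₂ :: D) := by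
    intro c₁ c₂; simp
  -- value as a function of the bits
  have step1 : ∀ c₁ c₂ : Bool,
      (∑ l ∈ Finset.Icc 1 m, cumW l (A ++ c₁ :: (C ++ c₂ :: D))) =
      (∑ l ∈ Finset.Icc 1 m, cumW l (A ++ false :: (C ++ c₂ :: D))) +
        c₁.toNat * (2 * m - 1) := by
    intro c₁ c₂
    have h := sum_cumW_insert A (C ++ c₂ :: D) c₁ m
    have hlen : (C ++ c₂ :: D).length = n - 2 := by simp [hCl, hDl]; omega
    rw [h, hlen, hAl]
    have : (1 + (n - 2) + 1) = n := by omega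
    rw [this]
    have := ccoef_one n m hmn hm3
    rw [this]
  have step2 : ∀ c₂ : Bool,
      (∑ l ∈ Finset.Icc 1 m, cumW l (A ++ false :: (C ++ c₂ :: D))) =
      (∑ l ∈ Finset.Icc 1 m, cumW l (A ++ false :: (C ++ false :: D))) +
        c₂.toNat * (2 * m - 1) := by
    intro c₂
    have hre : ∀ c₂ : Bool, A ++ false :: (C ++ c₂ :: D) = (A ++ false :: C) ++ c₂ :: D := by
      intro c₂; simp
    rw [hre, hre]
    have h := sum_cumW_insert (A ++ false :: C) D c₂ m
    have hlen1 : (A ++ false :: C).length = n - 2 := by simp [hAl, hCl]; omega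
    rw [h, hlen1, hDl]
    have h2 : (n - 2 + 1 + 1) = n := by omega
    rw [h2]
    rw [ccoef_top n m hmn hm3]
  set t := (∑ l ∈ Finset.Icc 1 m, cumW l (A ++ false :: (C ++ false :: D))) with ht
  have val : ∀ c₁ c₂ : Bool,
      (∑ l ∈ Finset.Icc 1 m, cumW l (A ++ c₁ :: (C ++ c₂ :: D))) =
      t + c₁.toNat * (2 * m - 1) + c₂.toNat * (2 * m - 1) := by
    intro c₁ c₂
    rw [step1, step2]; ring
  obtain ⟨u, hu⟩ := h3
  have hlt : t % 3 = 0 ∨ t % 3 = 1 ∨ t % 3 = 2 := by omega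
  rcases hlt with h | h | h
  · refine ⟨false, false, by decide, ?_⟩
    rw [hshape, val]; simp; omega
  · refine ⟨false, true, by decide, ?_⟩
    rw [hshape, val]; simp; omega
  · refine ⟨true, true, by decide, ?_⟩
    rw [hshape, val]; simp; omega
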